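/- Let a > 0, let n ≥ 1, and let x_1 ≥ x_2 ≥ … ≥ x_n be nonzero real numbers such that |∏_{i=1}^n (1 − x/x_i)| ≤ 1 for every x ∈ [0,a]. Then for every m ∈ {0,1,…,n} and every x ∈ [0,a], |∏_{i=1}^m (1 − x/x_i)| ≤ 1. -/

import Mathlib

open Finset Set

lemma key_factor (t : ℝ) (ht : 0 ≤ t) (xi xj : ℝ) (hxi : xi ≠ 0) (hxj : xj ≠ 0)
    (hle : xj ≤ xi) (h : 1 < |1 - t / xi|) : 1 ≤ |1 - t / xj| := by
  have h' := lt_abs.mp h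
  rcases h' with h1 | h1
  · -- 1 < 1 - t/xi ⇒ t/xi < 0 ⇒ xi < 0, t > 0
    have htxi : t / xi < 0 := by linarith
    have hxineg : xi < 0 := by
      rcases lt_trichotomy xi 0 with h | h | h
      · exact h
      · exact absurd h hxi
      · nlinarith [div_nonneg ht h.le]
    have hxjneg : xj < 0 := lt_of_le_of_lt hle hxineg
    have : t / xj ≤ 0 := div_nonpos_of_nonneg_of_nonpos ht hxjneg.le
    rw [abs_of_nonneg (by linarith)]; linarith
  · -- 1 < -(1 - t/xi) ⇒ t/xi > 2 ⇒ xi > 0, t > 2 xi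
    have htxi : 2 < t / xi := by linarith
    have hxipos : 0 < xi := by
      rcases lt_trichotomy xi 0 with h | h | h
      · nlinarith [div_nonpos_of_nonneg_of_nonpos ht h.le]
      · exact absurd h hxi
      · exact h
    rcases lt_trichotomy xj 0 with hj | hj | hj
    · have : t / xj ≤ 0 := div_nonpos_of_nonneg_of_nonpos ht hj.le
      rw [abs_of_nonneg (by linarith)]; linarith
    · exact absurd hj hxj
    · have h2xi : 2 * xi < t := (lt_div_iff₀ hxipos).mp htxi
      have h2 : 2 < t / xj := (lt_div_iff₀ hj).mpr (by nlinarith)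
      rw [abs_of_neg (by linarith)]; linarith

theorem reduced_polynomials_bounded
    (a : ℝ) (ha : 0 < a) (n : ℕ) (hn : 1 ≤ n)
    (x : ℕ → ℝ)
    (hx : ∀ i, i < n → x i ≠ 0)
    (hsort : ∀ i j, i ≤ j → j < n → x j ≤ x i)
    (hbound : ∀ t ∈ Set.Icc (0:ℝ) a, |∏ i ∈ Finset.range n, (1 - t / x i)| ≤ 1) :
    ∀ m : ℕ, m ≤ n → ∀ t ∈ Set.Icc (0:ℝ) a,
      |∏ i ∈ Finset.range m, (1 - t / x i)| ≤ 1 := by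
  intro m hm t ht
  by_cases hall : ∀ i < m, |1 - t / x i| ≤ 1
  · calc |∏ i ∈ Finset.range m, (1 - t / x i)|
        = ∏ i ∈ Finset.range m, |1 - t / x i| := by
          rw [Finset.abs_prod]
      _ ≤ 1 := Finset.prod_le_one (fun i _ => abs_nonneg _)
          (fun i hi => hall i (Finset.mem_range.mp hi))
  · push_neg at hall
    obtain ⟨i0, hi0m, hi0⟩ := hall
    have habs : |∏ i ∈ Finset.range m, (1 - t / x i)| ≤
        |∏ i ∈ Finset.range n, (1 - t / x i)| := by
      rw [← Finset.prod_range_mul_prod_Ico _ hm, abs_mul]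
      have h1 : (1:ℝ) ≤ ∏ i ∈ Finset.Ico m n, |1 - t / x i| := by
        calc (1:ℝ) = ∏ _i ∈ Finset.Ico m n, (1:ℝ) := by simp
          _ ≤ _ := Finset.prod_le_prod (fun i _ => zero_le_one) (fun j hj => ?_)
        obtain ⟨hmj, hjn⟩ := Finset.mem_Ico.mp hj
        exact key_factor t ht.1 (x i0) (x j)
          (hx i0 (lt_of_lt_of_le hi0m hm)) (hx j hjn)
          (hsort i0 j (le_trans hi0m.le hmj) hjn) hi0
      calc |∏ i ∈ Finset.range m, (1 - t / x i)|
          = |∏ i ∈ Finset.range m, (1 - t / x i)| * 1 := (mul_one _).symm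
        _ ≤ |∏ i ∈ Finset.range m, (1 - t / x i)| *
            ∏ i ∈ Finset.Ico m n, |1 - t / x i| :=
            mul_le_mul_of_nonneg_left h1 (abs_nonneg _)
        _ = _ := by rw [← Finset.abs_prod]
    exact le_trans habs (hbound t ht)
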